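/- arXiv:2407.16043 — 4 statements merged into one kernel-verified Lean document; each statement's English description precedes it below -/
import Mathlib

section
/- Let s be a positive integer and let λ be a partition with non-empty remainder sequence rem_s(λ) = (ρ_1, …, ρ_m) and row position sequence pos_s(λ) = (γ_1, …, γ_m). Then c_s(Δ_s λ) = c_s(λ) if either (m = 1 and γ_1 = 1) or (m > 1 and γ_{m−1} = γ_m − 1 and ρ_{m−1} ≥ ρ_m), and c_s(Δ_s λ) = c_s(λ) + 1 otherwise. -/
/-- A partition: a weakly decreasing list of positive integers. -/
def IsPartition (l : List ℕ) : Prop :=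
  l.Pairwise (· ≥ ·) ∧ ∀ x ∈ l, 0 < x

/-- `r_s(λ)`: the number of parts of `λ` divisible by `s`. -/
def partRs (s : ℕ) (l : List ℕ) : ℕ := l.countP (fun x => decide (x % s = 0))

/-- `c_s(λ)`: the number of cells `(i, j)` of the Ferrers diagram of `λ`
with leg length zero and arm length plus one divisible by `s`. -/
def partCs (s : ℕ) (l : List ℕ) : ℕ :=
  ∑ i ∈ Finset.range l.length,
    ((Finset.Icc 1 (l.getD i 0)).filter
      (fun j => l.getD (i + 1) 0 < j ∧ (l.getD i 0 - j + 1) % s = 0)).card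

/-- `rem_s(λ)`: the sequence of non-zero remainders of the parts of `λ`
upon division by `s`, in the order of the parts. -/
def partRem (s : ℕ) (l : List ℕ) : List ℕ :=
  (l.map (fun x => x % s)).filter (fun x => decide (x ≠ 0))

/-- `pos_s(λ)`: the increasing sequence of (1-indexed) positions of the parts
of `λ` not divisible by `s`. -/
def posSeq (s : ℕ) (l : List ℕ) : List ℕ :=
  ((List.range l.length).filter (fun i => decide (l.getD i 0 % s ≠ 0))).map (· + 1)

/-- `Δ_s λ`: replace the part `λ_{γ_m}` (the last part not divisible by `s`)
by `λ_{γ_m} - ρ_m`, deleting it if it becomes zero. -/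
def deltaS (s : ℕ) (l : List ℕ) : List ℕ :=
  let i := ((List.range l.length).filter (fun i => decide (l.getD i 0 % s ≠ 0))).getLastD 0
  (l.set i (l.getD i 0 - l.getD i 0 % s)).filter (fun x => decide (x ≠ 0))
private lemma row_card (s a b : ℕ) (hs : 0 < s) (hab : a ≤ b) :
    ((Finset.Icc 1 b).filter (fun j => a < j ∧ (b - j + 1) % s = 0)).card = (b - a) / s := by
  rw [← Nat.Ioc_filter_dvd_card_eq_div (b - a) s]
  apply Finset.card_bij' (fun j _ => b + 1 - j) (fun t _ => b + 1 - t)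
  · intro j hj
    simp only [Finset.mem_filter, Finset.mem_Icc, Finset.mem_Ioc] at hj ⊢
    obtain ⟨⟨h1, h2⟩, h3, h4⟩ := hj
    have hd : s ∣ (b - j + 1) := Nat.dvd_of_mod_eq_zero h4
    have he : b - j + 1 = b + 1 - j := by omega
    rw [he] at hd
    exact ⟨by omega, hd⟩
  · intro t ht
    simp only [Finset.mem_filter, Finset.mem_Icc, Finset.mem_Ioc] at ht ⊢
    obtain ⟨⟨h1, h2⟩, h3⟩ := ht
    refine ⟨⟨by omega, by omega⟩, by omega, ?_⟩
    have he : b - (b + 1 - t) + 1 = t := by omega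
    rw [he]
    exact Nat.mod_eq_zero_of_dvd h3
  · intro j hj
    simp only [Finset.mem_filter, Finset.mem_Icc] at hj
    omega
  · intro t ht
    simp only [Finset.mem_filter, Finset.mem_Ioc] at ht
    omega

private lemma getD_anti (l : List ℕ) (hl : l.Pairwise (· ≥ ·)) {i j : ℕ} (hij : i ≤ j) :
    l.getD j 0 ≤ l.getD i 0 := by
  rcases Nat.lt_or_ge j l.length with hj | hj
  · have hi : i < l.length := Nat.lt_of_le_of_lt hij hj
    rcases Nat.eq_or_lt_of_le hij with rfl | hlt
    · exact le_refl _
    · rw [List.getD_eq_getElem l _ hj, List.getD_eq_getElem l _ hi]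
      exact List.pairwise_iff_getElem.mp hl i j hi hj hlt
  · rw [List.getD_eq_default l _ hj]; exact Nat.zero_le _

private lemma partCs_eq_sum (s : ℕ) (hs : 0 < s) (l : List ℕ) (hl : l.Pairwise (· ≥ ·)) :
    partCs s l = ∑ i ∈ Finset.range l.length, (l.getD i 0 - l.getD (i + 1) 0) / s := by
  refine Finset.sum_congr rfl fun i hi => ?_
  exact row_card s _ _ hs (getD_anti l hl (Nat.le_succ i))

private lemma div_key1 (s x ρ : ℕ) (hs : 0 < s) (hx : s ∣ x) (hρ : ρ < s) :
    (x + ρ) / s = x / s := by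
  obtain ⟨k, rfl⟩ := hx
  rw [Nat.mul_add_div hs, Nat.div_eq_of_lt hρ, Nat.mul_div_cancel_left _ hs]
  omega

private lemma div_key2 (s a b : ℕ) (hs : 0 < s) (hab : b ≤ a) :
    (a - (b - b % s)) / s = (a - b) / s + (if b % s ≤ a % s then 0 else 1) := by
  have hq0 : b / s ≤ a / s := Nat.div_le_div_right hab
  obtain ⟨qa, ra, hra, hras, hqas, ha⟩ :
      ∃ q r, r < s ∧ a % s = r ∧ a / s = q ∧ a = s * q + r :=
    ⟨_, _, Nat.mod_lt _ hs, rfl, rfl, (Nat.div_add_mod a s).symm⟩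
  obtain ⟨qb, rb, hrb, hrbs, hqbs, hb⟩ :
      ∃ q r, r < s ∧ b % s = r ∧ b / s = q ∧ b = s * q + r :=
    ⟨_, _, Nat.mod_lt _ hs, rfl, rfl, (Nat.div_add_mod b s).symm⟩
  have hq : qb ≤ qa := by rw [← hqas, ← hqbs]; exact hq0
  rw [hras, hrbs]
  subst ha; subst hb
  have hm : s * (qa - qb) + s * qb = s * qa := by
    rw [← Nat.mul_add, Nat.sub_add_cancel hq]
  by_cases hc : rb ≤ ra
  · rw [if_pos hc]
    have e1 : s * qa + ra - (s * qb + rb - rb) = s * (qa - qb) + ra := by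
      generalize s * (qa - qb) = Z at hm ⊢
      generalize s * qa = X at hm ⊢
      generalize s * qb = Y at hm ⊢
      omega
    have e2 : s * qa + ra - (s * qb + rb) = s * (qa - qb) + (ra - rb) := by
      generalize s * (qa - qb) = Z at hm ⊢
      generalize s * qa = X at hm ⊢
      generalize s * qb = Y at hm ⊢
      omega
    rw [e1, e2, Nat.mul_add_div hs, Nat.mul_add_div hs, Nat.div_eq_of_lt hra,
      Nat.div_eq_of_lt (show ra - rb < s by omega)]
  · rw [if_neg hc]
    push_neg at hc
    have hq1 : qb + 1 ≤ qa := by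
      rcases Nat.eq_or_lt_of_le hq with he | h
      · exfalso
        subst he
        have : s * qb + rb ≤ s * qb + ra := hab
        omega
      · omega
    have hm2 : s * (qa - qb - 1) + s = s * (qa - qb) := by
      have h3 : qa - qb - 1 + 1 = qa - qb := by omega
      calc s * (qa - qb - 1) + s = s * (qa - qb - 1 + 1) := by rw [Nat.mul_succ]
        _ = s * (qa - qb) := by rw [h3]
    have e1 : s * qa + ra - (s * qb + rb - rb) = s * (qa - qb) + ra := by
      generalize s * (qa - qb) = Z at hm ⊢
      generalize s * qa = X at hm ⊢
      generalize s * qb = Y at hm ⊢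
      omega
    have e2 : s * qa + ra - (s * qb + rb) = s * (qa - qb - 1) + (s - rb + ra) := by
      generalize s * (qa - qb - 1) = W at hm2 ⊢
      generalize s * (qa - qb) = Z at hm hm2 ⊢
      generalize s * qa = X at hm ⊢
      generalize s * qb = Y at hm ⊢
      omega
    rw [e1, e2, Nat.mul_add_div hs, Nat.mul_add_div hs, Nat.div_eq_of_lt hra,
      Nat.div_eq_of_lt (show s - rb + ra < s by omega)]
    omega

private lemma getD_set_eq (l : List ℕ) (i v j : ℕ) :
    (l.set i v).getD j 0 = if i = j ∧ i < l.length then v else l.getD j 0 := by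
  by_cases h1 : i = j
  · by_cases h2 : i < l.length
    · rw [if_pos ⟨h1, h2⟩]
      subst h1
      rw [List.getD_eq_getElem _ _ (by rw [List.length_set]; exact h2)]
      exact List.getElem_set_self _
    · rw [if_neg (by tauto), List.set_eq_of_length_le (by omega)]
  · rw [if_neg (by tauto)]
    simp only [List.getD_eq_getElem?_getD, List.getElem?_set_ne h1]

private lemma self_eq_map_range (l : List ℕ) :
    l = (List.range l.length).map (fun i => l.getD i 0) := by
  refine List.ext_getElem (by simp) fun i h1 h2 => ?_
  simp only [List.getElem_map, List.getElem_range]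
  rw [List.getD_eq_getElem l _ h1]

private lemma sub_mod_dvd (s x : ℕ) : s ∣ (x - x % s) := by
  refine ⟨x / s, ?_⟩
  have h := Nat.div_add_mod x s
  generalize s * (x / s) = X at h ⊢
  generalize x % s = r at h ⊢
  omega

private lemma dvd_le_sub_mod (s b c : ℕ) (hs : 0 < s) (hc : s ∣ c) (hcb : c ≤ b) :
    c ≤ b - b % s := by
  obtain ⟨k, rfl⟩ := hc
  have h := Nat.div_add_mod b s
  have hrb : b % s < s := Nat.mod_lt _ hs
  rcases le_or_gt k (b / s) with h1 | h1
  · have h2 : s * k ≤ s * (b / s) := Nat.mul_le_mul_left s h1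
    generalize s * k = K at h2 hcb ⊢
    generalize s * (b / s) = X at h h2
    generalize b % s = r at h hrb ⊢
    omega
  · exfalso
    have h2 : s * (b / s + 1) ≤ s * k := Nat.mul_le_mul_left s h1
    rw [Nat.mul_add, Nat.mul_one] at h2
    generalize s * k = K at h2 hcb
    generalize s * (b / s) = X at h h2
    generalize b % s = r at h hrb
    omega

theorem stmt6 (s : ℕ) (hs : 0 < s) (l : List ℕ) (hl : IsPartition l)
    (hne : partRem s l ≠ []) :
    partCs s (deltaS s l) =
      if ((partRem s l).length = 1 ∧ (posSeq s l).getD 0 0 = 1) ∨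
          (1 < (partRem s l).length ∧
            (posSeq s l).getD ((partRem s l).length - 2) 0 =
              (posSeq s l).getD ((partRem s l).length - 1) 0 - 1 ∧
            (partRem s l).getD ((partRem s l).length - 1) 0 ≤
              (partRem s l).getD ((partRem s l).length - 2) 0)
      then partCs s l
      else partCs s l + 1 := by
  obtain ⟨hsort, hpos⟩ := hl
  classical
  set L := (List.range l.length).filter (fun i => decide (l.getD i 0 % s ≠ 0)) with hL
  have hrem : partRem s l = L.map (fun i => l.getD i 0 % s) := by
    rw [partRem]
    conv_lhs => rw [self_eq_map_range l]
    rw [List.map_map, hL, List.filter_map]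
    rfl
  have hpos_eq : posSeq s l = L.map (· + 1) := by rw [posSeq, hL]
  have hLne : L ≠ [] := fun h => hne (by rw [hrem, h, List.map_nil])
  have hM : 0 < L.length := List.length_pos_iff.mpr hLne
  set i₀ := L.getLastD 0 with hi₀def
  have hi₀elem : L[L.length - 1]'(by omega) = i₀ := by
    rw [hi₀def, List.getLastD_eq_getLast?, List.getLast?_eq_getLast hLne]
    simp [List.getLast_eq_getElem]
  have hmemL : ∀ j, j ∈ L ↔ j < l.length ∧ l.getD j 0 % s ≠ 0 := by
    intro j; rw [hL, List.mem_filter, List.mem_range]; simp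
  have hpair : L.Pairwise (· < ·) :=
    List.Pairwise.sublist List.filter_sublist List.pairwise_lt_range
  have hmax : ∀ j ∈ L, j ≤ i₀ := by
    intro j hj
    obtain ⟨k, hk, hkj⟩ := List.mem_iff_getElem.mp hj
    rcases Nat.lt_or_ge k (L.length - 1) with h | h
    · have h2 := List.pairwise_iff_getElem.mp hpair k (L.length - 1) (by omega) (by omega) h
      rw [hi₀elem, hkj] at h2; omega
    · have he : k = L.length - 1 := by omega
      subst he; rw [hkj] at hi₀elem; omega
  have hi₀mem : i₀ ∈ L := by rw [← hi₀elem]; exact List.getElem_mem _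
  have hi₀n : i₀ < l.length := ((hmemL i₀).1 hi₀mem).1
  have hρ0 : l.getD i₀ 0 % s ≠ 0 := ((hmemL i₀).1 hi₀mem).2
  have habove : ∀ j, i₀ < j → j < l.length → l.getD j 0 % s = 0 := by
    intro j h1 h2; by_contra h
    have := hmax j ((hmemL j).2 ⟨h2, h⟩); omega
  have hρs : l.getD i₀ 0 % s < s := Nat.mod_lt _ hs
  have hposD : ∀ j, j < l.length → 0 < l.getD j 0 := fun j hj => by
    rw [List.getD_eq_getElem l _ hj]; exact hpos _ (List.getElem_mem _)
  have hval : ∀ k (hk : k < L.length),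
      (partRem s l).getD k 0 = l.getD (L[k]'hk) 0 % s := by
    intro k hk
    rw [hrem, List.getD_eq_getElem _ _ (by simpa using hk), List.getElem_map]
  have hvalp : ∀ k (hk : k < L.length), (posSeq s l).getD k 0 = (L[k]'hk) + 1 := by
    intro k hk
    rw [hpos_eq, List.getD_eq_getElem _ _ (by simpa using hk), List.getElem_map]
  have hlenrem : (partRem s l).length = L.length := by rw [hrem, List.length_map]
  -- the condition iff
  have hiffQ : (((partRem s l).length = 1 ∧ (posSeq s l).getD 0 0 = 1) ∨
      (1 < (partRem s l).length ∧
        (posSeq s l).getD ((partRem s l).length - 2) 0 =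
          (posSeq s l).getD ((partRem s l).length - 1) 0 - 1 ∧
        (partRem s l).getD ((partRem s l).length - 1) 0 ≤
          (partRem s l).getD ((partRem s l).length - 2) 0)) ↔
      (i₀ = 0 ∨ (0 < i₀ ∧ l.getD i₀ 0 % s ≤ l.getD (i₀ - 1) 0 % s)) := by
    rw [hlenrem]
    rcases Nat.lt_or_ge 1 L.length with hM2 | hM1
    · -- 1 < L.length
      have hMm : L.length - 1 < L.length := by omega
      have hM2' : L.length - 2 < L.length := by omega
      have hj₁lt : L[L.length - 2]'hM2' < i₀ := by
        have h2 := List.pairwise_iff_getElem.mp hpair (L.length - 2) (L.length - 1)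
          hM2' hMm (by omega)
        rw [hi₀elem] at h2; exact h2
      constructor
      · rintro (⟨h1, -⟩ | ⟨-, hp, hr⟩)
        · omega
        · right
          rw [hvalp _ hM2', hvalp _ hMm, hi₀elem] at hp
          rw [hval _ hM2', hval _ hMm, hi₀elem] at hr
          have hj : L[L.length - 2]'hM2' = i₀ - 1 := by omega
          rw [hj] at hr
          exact ⟨by omega, hr⟩
      · rintro (h0 | ⟨hip, hle⟩)
        · omega
        · have hmem : (i₀ - 1) ∈ L := (hmemL _).2 ⟨by omega, by omega⟩
          obtain ⟨k, hk, hkj⟩ := List.mem_iff_getElem.mp hmem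
          have hkne : k ≠ L.length - 1 := by
            intro he
            subst he
            rw [hi₀elem] at hkj; omega
          have hle2 : L[k]'hk ≤ L[L.length - 2]'hM2' := by
            rcases Nat.lt_or_ge k (L.length - 2) with hlt | hge
            · exact Nat.le_of_lt (List.pairwise_iff_getElem.mp hpair k (L.length - 2) hk hM2' hlt)
            · have : k = L.length - 2 := by omega
              subst this; exact le_refl _
          have hj : L[L.length - 2]'hM2' = i₀ - 1 := by omega
          right
          refine ⟨hM2, ?_, ?_⟩
          · rw [hvalp _ hM2', hvalp _ hMm, hi₀elem, hj]; omega
          · rw [hval _ hM2', hval _ hMm, hi₀elem, hj]; exact hle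
    · -- L.length = 1
      have hM1' : L.length = 1 := by omega
      rw [hM1']
      have hL0 : L[0]'(by omega) = i₀ := by
        convert hi₀elem using 2
        omega
      constructor
      · rintro (⟨-, hp⟩ | ⟨h, -⟩)
        · left
          rw [hvalp 0 (by omega), hL0] at hp
          omega
        · omega
      · rintro (h0 | ⟨hip, hle⟩)
        · exact Or.inl ⟨rfl, by rw [hvalp 0 (by omega), hL0, h0]⟩
        · exfalso
          have hmem : (i₀ - 1) ∈ L := (hmemL _).2 ⟨by omega, by omega⟩
          obtain ⟨k, hk, hkj⟩ := List.mem_iff_getElem.mp hmem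
          have hk0 : k = 0 := by omega
          subst hk0
          rw [hL0] at hkj; omega
  -- deltaS description
  have hdlt : deltaS s l =
      (l.set i₀ (l.getD i₀ 0 - l.getD i₀ 0 % s)).filter (fun x => decide (x ≠ 0)) := by
    simp only [deltaS]
    rfl
  set v := l.getD i₀ 0 - l.getD i₀ 0 % s with hv
  have hbv : l.getD i₀ 0 = v + l.getD i₀ 0 % s := by
    rw [hv]
    exact (Nat.sub_add_cancel (Nat.mod_le _ _)).symm
  have hvd : s ∣ v := by rw [hv]; exact sub_mod_dvd s _
  have hdivbelow : ∀ j, i₀ < j → s ∣ l.getD j 0 ∧ l.getD j 0 ≤ v := by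
    intro j hj
    rcases Nat.lt_or_ge j l.length with h2 | h2
    · have hd : s ∣ l.getD j 0 := Nat.dvd_of_mod_eq_zero (habove j hj h2)
      exact ⟨hd, by rw [hv]; exact dvd_le_sub_mod s _ _ hs hd (getD_anti l hsort (le_of_lt hj))⟩
    · rw [List.getD_eq_default l _ h2]; exact ⟨dvd_zero s, Nat.zero_le _⟩
  -- main computation
  have main : partCs s (deltaS s l) = partCs s l +
      (if (i₀ = 0 ∨ (0 < i₀ ∧ l.getD i₀ 0 % s ≤ l.getD (i₀ - 1) 0 % s)) then 0 else 1) := by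
    have hQ' : 0 < i₀ →
        ((i₀ = 0 ∨ (0 < i₀ ∧ l.getD i₀ 0 % s ≤ l.getD (i₀ - 1) 0 % s)) ↔
          (l.getD i₀ 0 % s ≤ l.getD (i₀ - 1) 0 % s)) := by
      intro hp0
      constructor
      · rintro (h | ⟨-, h⟩)
        · omega
        · exact h
      · intro h; exact Or.inr ⟨hp0, h⟩
    by_cases hv0 : v = 0
    · -- the last nonmultiple part is deleted
      have hbs : l.getD i₀ 0 < s := by
        rw [hbv, hv0, Nat.zero_add]; exact hρs
      have hi₀last : i₀ = l.length - 1 := by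
        by_contra hne'
        have h1 : i₀ + 1 < l.length := by omega
        obtain ⟨hd, hle⟩ := hdivbelow (i₀ + 1) (by omega)
        have hp1 := hposD (i₀ + 1) h1
        have := Nat.le_of_dvd hp1 hd
        omega
      have htake : deltaS s l = l.take i₀ := by
        rw [hdlt, hv0]
        rw [List.set_eq_take_cons_drop _ hi₀n]
        have hdrop : l.drop (i₀ + 1) = [] := by
          apply List.drop_eq_nil_of_le
          omega
        rw [hdrop, List.filter_append]
        have h2 : List.filter (fun x => decide (x ≠ 0)) ((0 : ℕ) :: []) = [] := by simp
        rw [h2, List.append_nil]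
        exact List.filter_eq_self.mpr
          (fun a ha => by simpa using (hpos a (List.mem_of_mem_take ha)).ne')
      rw [htake, partCs_eq_sum s hs _ (List.Pairwise.sublist (List.take_sublist _ _) hsort),
        partCs_eq_sum s hs l hsort]
      have hlt : (l.take i₀).length = i₀ := by rw [List.length_take]; omega
      rw [hlt]
      have hgd : ∀ j, (l.take i₀).getD j 0 = if j < i₀ then l.getD j 0 else 0 := by
        intro j
        by_cases hj : j < i₀
        · rw [if_pos hj, List.getD_eq_getElem _ _ (by rw [hlt]; exact hj),
            List.getD_eq_getElem l _ (by omega)]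
          simp [List.getElem_take]
        · rw [if_neg hj, List.getD_eq_default _ _ (by omega)]
      have hn1 : l.length = i₀ + 1 := by omega
      rw [hn1, Finset.sum_range_succ]
      have hlast : (l.getD i₀ 0 - l.getD (i₀ + 1) 0) / s = 0 :=
        Nat.div_eq_of_lt (by omega)
      rw [hlast, Nat.add_zero]
      rcases Nat.eq_zero_or_pos i₀ with h0 | hp0
      · rw [h0]
        simp
      · simp only [hQ' hp0]
        conv_lhs => rw [← Finset.sum_erase_add (Finset.range i₀) _
          (Finset.mem_range.2 (show i₀ - 1 < i₀ by omega))]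
        conv_rhs => rw [← Finset.sum_erase_add (Finset.range i₀) _
          (Finset.mem_range.2 (show i₀ - 1 < i₀ by omega))]
        have hsum : ∑ i ∈ (Finset.range i₀).erase (i₀ - 1),
            ((l.take i₀).getD i 0 - (l.take i₀).getD (i + 1) 0) / s
            = ∑ i ∈ (Finset.range i₀).erase (i₀ - 1),
            (l.getD i 0 - l.getD (i + 1) 0) / s := by
          refine Finset.sum_congr rfl fun i hi => ?_
          obtain ⟨hne2, hilt⟩ := Finset.mem_erase.1 hi
          rw [Finset.mem_range] at hilt
          rw [hgd i, hgd (i + 1), if_pos (by omega), if_pos (by omega)]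
        rw [hsum]
        have hterm : ((l.take i₀).getD (i₀ - 1) 0 - (l.take i₀).getD (i₀ - 1 + 1) 0) / s
            = (l.getD (i₀ - 1) 0 - l.getD (i₀ - 1 + 1) 0) / s
              + (if l.getD i₀ 0 % s ≤ l.getD (i₀ - 1) 0 % s then 0 else 1) := by
          rw [hgd, hgd, if_pos (by omega), if_neg (by omega),
            show i₀ - 1 + 1 = i₀ from by omega, Nat.sub_zero]
          have hk := div_key2 s (l.getD (i₀ - 1) 0) (l.getD i₀ 0) hs
            (getD_anti l hsort (by omega))
          rw [← hv, hv0, Nat.sub_zero] at hk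
          exact hk
        rw [hterm]
        omega
    · -- the last nonmultiple part shrinks to v > 0
      have hvpos : 0 < v := Nat.pos_of_ne_zero hv0
      have hfilter : (l.set i₀ v).filter (fun x => decide (x ≠ 0)) = l.set i₀ v := by
        rw [List.filter_eq_self]
        intro a ha
        rcases List.mem_or_eq_of_mem_set ha with h | h
        · simpa using (hpos a h).ne'
        · subst h; simpa using hv0
      have hsort' : (l.set i₀ v).Pairwise (· ≥ ·) := by
        refine List.pairwise_iff_getElem.2 fun i j hi hj hij => ?_
        rw [List.length_set] at hi hj
        have e : ∀ (k : ℕ) (hk : k < l.length),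
            (l.set i₀ v)[k]'(by rw [List.length_set]; exact hk) = (l.set i₀ v).getD k 0 :=
          fun k hk => (List.getD_eq_getElem _ _ _).symm
        rw [e i hi, e j hj, getD_set_eq, getD_set_eq]
        by_cases h1 : i₀ = i
        · rw [if_pos ⟨h1, hi₀n⟩, if_neg (by omega)]
          exact (hdivbelow j (by omega)).2
        · rw [if_neg (by tauto)]
          by_cases h2 : i₀ = j
          · rw [if_pos ⟨h2, hi₀n⟩]
            have h3 := getD_anti l hsort (show i ≤ i₀ by omega)
            omega
          · rw [if_neg (by tauto)]
            exact getD_anti l hsort (by omega)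
      rw [hdlt, hfilter, partCs_eq_sum s hs _ hsort', partCs_eq_sum s hs l hsort,
        List.length_set]
      have hsetD : ∀ j : ℕ, (l.set i₀ v).getD j 0
          = if i₀ = j ∧ i₀ < l.length then v else l.getD j 0 :=
        fun j => getD_set_eq l i₀ v j
      have hstep : ∀ i, i + 1 ≠ i₀ →
          ((l.set i₀ v).getD i 0 - (l.set i₀ v).getD (i + 1) 0) / s
          = (l.getD i 0 - l.getD (i + 1) 0) / s := by
        intro i hne2
        by_cases hii : i₀ = i
        · subst hii
          rw [hsetD, hsetD, if_pos ⟨rfl, hi₀n⟩, if_neg (by omega)]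
          obtain ⟨hdc, hlec⟩ := hdivbelow (i₀ + 1) (by omega)
          rw [show l.getD i₀ 0 - l.getD (i₀ + 1) 0
              = (v - l.getD (i₀ + 1) 0) + l.getD i₀ 0 % s from by omega]
          exact (div_key1 s _ _ hs (Nat.dvd_sub hvd hdc) hρs).symm
        · rw [hsetD, hsetD, if_neg (by tauto), if_neg (by omega)]
      rcases Nat.eq_zero_or_pos i₀ with h0 | hp0
      · have hcg : ∀ i ∈ Finset.range l.length,
            ((l.set i₀ v).getD i 0 - (l.set i₀ v).getD (i + 1) 0) / s
            = (l.getD i 0 - l.getD (i + 1) 0) / s := by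
          intro i hi
          exact hstep i (by omega)
        rw [Finset.sum_congr rfl hcg, if_pos (Or.inl h0), Nat.add_zero]
      · simp only [hQ' hp0]
        conv_lhs => rw [← Finset.sum_erase_add (Finset.range l.length) _
          (Finset.mem_range.2 (show i₀ - 1 < l.length by omega))]
        conv_rhs => rw [← Finset.sum_erase_add (Finset.range l.length) _
          (Finset.mem_range.2 (show i₀ - 1 < l.length by omega))]
        have hsum : ∑ i ∈ (Finset.range l.length).erase (i₀ - 1),
            ((l.set i₀ v).getD i 0 - (l.set i₀ v).getD (i + 1) 0) / s
            = ∑ i ∈ (Finset.range l.length).erase (i₀ - 1),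
            (l.getD i 0 - l.getD (i + 1) 0) / s := by
          refine Finset.sum_congr rfl fun i hi => ?_
          obtain ⟨hne2, hilt⟩ := Finset.mem_erase.1 hi
          exact hstep i (by omega)
        rw [hsum]
        have hterm : ((l.set i₀ v).getD (i₀ - 1) 0 - (l.set i₀ v).getD (i₀ - 1 + 1) 0) / s
            = (l.getD (i₀ - 1) 0 - l.getD (i₀ - 1 + 1) 0) / s
              + (if l.getD i₀ 0 % s ≤ l.getD (i₀ - 1) 0 % s then 0 else 1) := by
          rw [hsetD, hsetD, if_neg (by omega), if_pos ⟨by omega, hi₀n⟩,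
            show i₀ - 1 + 1 = i₀ from by omega]
          have hk := div_key2 s (l.getD (i₀ - 1) 0) (l.getD i₀ 0) hs
            (getD_anti l hsort (by omega))
          rw [← hv] at hk
          exact hk
        rw [hterm]
        omega
  rw [main]
  by_cases h : (i₀ = 0 ∨ (0 < i₀ ∧ l.getD i₀ 0 % s ≤ l.getD (i₀ - 1) 0 % s))
  · rw [if_pos h, if_pos (hiffQ.mpr h), Nat.add_zero]
  · rw [if_neg h, if_neg (fun hc => h (hiffQ.mp hc))]
end

section
/- Let s be a positive integer and let λ be a partition whose remainder sequence rem_s(λ) = (ρ_1, …, ρ_m) modulo s is strictly increasing, with row position sequence pos_s(λ) = (γ_1, …, γ_m). Then for each 1 ≤ j ≤ m, the cell (γ_j, ⌊λ_{γ_j}/s⌋ + 1) is an outer corner of the s-reduction λ↓s = (⌊λ_1/s⌋, …, ⌊λ_ℓ/s⌋); that is, either γ_j = 1 or ⌊λ_{γ_j − 1}/s⌋ ≥ ⌊λ_{γ_j}/s⌋ + 1. Moreover these m cells lie in pairwise distinct columns, i.e., the values ⌊λ_{γ_j}/s⌋ + 1 for j = 1, …, m are pairwise distinct. -/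
lemma div_succ_le_of_mod_lt {s a b : ℕ} (hab : b ≤ a) (hm : a % s < b % s) :
    b / s + 1 ≤ a / s := by
  by_contra h
  push_neg at h
  have h' : a / s ≤ b / s := by omega
  have := Nat.mul_le_mul_left s h'
  have ha := Nat.div_add_mod a s
  have hb := Nat.div_add_mod b s
  omega

lemma key_lem (s : ℕ) (l : List ℕ) (hinc : (partRem s l).Pairwise (· < ·)) :
    ∀ i j (hi : i < l.length) (hj : j < l.length), i < j →
      l[i] % s ≠ 0 → l[j] % s ≠ 0 → l[i] % s < l[j] % s := by
  have h := hinc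
  unfold partRem at h
  rw [List.pairwise_filter, List.pairwise_map,
    List.pairwise_iff_getElem] at h
  intro i j hi hj hij h1 h2
  exact h i j (by simpa using hi) (by simpa using hj) hij (by simpa using h1) (by simpa using h2)

theorem stmt7 (s : ℕ) (hs : 0 < s) (l : List ℕ) (hl : IsPartition l)
    (hinc : (partRem s l).Pairwise (· < ·)) :
    -- each cell (γ_j, ⌊λ_{γ_j}/s⌋ + 1) is an outer corner of the s-reduction
    (∀ g ∈ posSeq s l, g = 1 ∨ l.getD (g - 1) 0 / s + 1 ≤ l.getD (g - 2) 0 / s) ∧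
    -- and these cells lie in pairwise distinct columns
    ((posSeq s l).map (fun g => l.getD (g - 1) 0 / s + 1)).Nodup := by
  have hkey := key_lem s l hinc
  have hsorted : ∀ i j (hi : i < l.length) (hj : j < l.length), i ≤ j → l[j] ≤ l[i] := by
    intro i j hi hj hij
    rcases eq_or_lt_of_le hij with rfl | hij
    · exact le_refl _
    · have := hl.1
      rw [List.pairwise_iff_getElem] at this
      exact this i j hi hj hij
  constructor
  · intro g hg
    simp only [posSeq, List.mem_map, List.mem_filter, List.mem_range, decide_eq_true_eq] at hg
    obtain ⟨i, ⟨hi, hne⟩, rfl⟩ := hg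
    rcases Nat.eq_zero_or_pos i with rfl | hpos
    · exact Or.inl rfl
    · right
      have hi' : i - 1 < l.length := by omega
      have e1 : i + 1 - 1 = i := by omega
      have e2 : i + 1 - 2 = i - 1 := by omega
      rw [e1, e2, List.getD_eq_getElem l 0 hi, List.getD_eq_getElem l 0 hi']
      rw [List.getD_eq_getElem l 0 hi] at hne
      have hle : l[i] ≤ l[i-1] := hsorted (i-1) i hi' hi (by omega)
      have hmod : l[i-1] % s < l[i] % s := by
        by_cases h0 : l[i-1] % s = 0
        · omega
        · exact hkey (i-1) i hi' hi (by omega) h0 hne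
      exact div_succ_le_of_mod_lt hle hmod
  · rw [List.Nodup, posSeq, List.map_map, List.pairwise_map, List.pairwise_filter,
      List.pairwise_iff_getElem]
    intro i j hi hj hij
    have hi' : i < l.length := by simpa using hi
    have hj' : j < l.length := by simpa using hj
    simp only [List.getElem_range, Function.comp_apply, Nat.add_sub_cancel,
      List.getD_eq_getElem l 0 hi', List.getD_eq_getElem l 0 hj']
    intro h1 h2
    have hle : l[j] ≤ l[i] := hsorted i j hi' hj' (by omega)
    have hmod : l[i] % s < l[j] % s := hkey i j hi' hj' hij (by simpa using h1) (by simpa using h2)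
    have := div_succ_le_of_mod_lt hle hmod
    omega
end

section
/- Let s be a positive integer and let λ be a non-empty partition whose remainder sequence rem_s(λ) modulo s is strictly increasing of length m. Then r_s(λ) = ℓ(λ) − m and c_s(λ) = ⌈λ_1/s⌉ − m (here ⌈λ_1/s⌉ is the number of columns of the remainder diagram of λ). -/
lemma ceilDiv (s a : ℕ) (hs : 0 < s) :
    (a + s - 1) / s = a / s + (if a % s = 0 then 0 else 1) := by
  have h := Nat.div_add_mod a s
  by_cases h0 : a % s = 0
  · have h1 : a + s - 1 = s * (a / s) + (s - 1) := by omega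
    rw [h1, Nat.mul_add_div hs, Nat.div_eq_of_lt (show s - 1 < s by omega), if_pos h0]
  · have hlt : a % s < s := Nat.mod_lt _ hs
    have h2 : s * (a / s + 1) = s * (a / s) + s := by ring
    have h1 : a + s - 1 = s * (a / s + 1) + (a % s - 1) := by omega
    rw [h1, Nat.mul_add_div hs, Nat.div_eq_of_lt (show a % s - 1 < s by omega), if_neg h0]

lemma keyArith (s a b : ℕ) (hs : 0 < s) (hba : b ≤ a) (h : b % s ≠ 0 → a % s < b % s) :
    (a - b) / s + ((b + s - 1) / s + (if a % s = 0 then 0 else 1)) = (a + s - 1) / s := by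
  obtain ⟨qa, ra, hra, rfl⟩ : ∃ q r, r < s ∧ a = s * q + r :=
    ⟨a / s, a % s, Nat.mod_lt _ hs, (Nat.div_add_mod a s).symm⟩
  obtain ⟨qb, rb, hrb, rfl⟩ : ∃ q r, r < s ∧ b = s * q + r :=
    ⟨b / s, b % s, Nat.mod_lt _ hs, (Nat.div_add_mod b s).symm⟩
  have hma : (s * qa + ra) % s = ra := by rw [Nat.mul_add_mod]; exact Nat.mod_eq_of_lt hra
  have hmb : (s * qb + rb) % s = rb := by rw [Nat.mul_add_mod]; exact Nat.mod_eq_of_lt hrb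
  have hda : (s * qa + ra) / s = qa := by
    rw [Nat.mul_add_div hs, Nat.div_eq_of_lt hra]
    omega
  have hdb : (s * qb + rb) / s = qb := by
    rw [Nat.mul_add_div hs, Nat.div_eq_of_lt hrb]
    omega
  rw [hma, hmb] at h
  rw [ceilDiv s _ hs, ceilDiv s _ hs, hma, hmb, hda, hdb]
  by_cases h0 : rb = 0
  · subst h0
    have hqq : qb ≤ qa := by
      by_contra hc
      push_neg at hc
      have h3 : s * (qa + 1) ≤ s * qb := Nat.mul_le_mul_left s hc
      have h4 : s * (qa + 1) = s * qa + s := by ring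
      omega
    have h1 : s * (qa - qb) + s * qb = s * qa := by
      rw [← Nat.mul_add, Nat.sub_add_cancel hqq]
    have h2 : s * qa + ra - (s * qb + 0) = s * (qa - qb) + ra := by omega
    rw [h2, Nat.mul_add_div hs, Nat.div_eq_of_lt hra]
    simp
    omega
  · have hlt : ra < rb := h h0
    have hqq : qb < qa := by
      by_contra hc
      push_neg at hc
      have h3 : s * qa ≤ s * qb := Nat.mul_le_mul_left s hc
      omega
    have h1 : s * (qa - qb - 1) + s * (qb + 1) = s * qa := by
      rw [← Nat.mul_add]
      congr 1
      omega
    have h2 : s * (qb + 1) = s * qb + s := by ring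
    have h3 : s * qa + ra - (s * qb + rb) = s * (qa - qb - 1) + (s + ra - rb) := by omega
    rw [h3, Nat.mul_add_div hs, Nat.div_eq_of_lt (show s + ra - rb < s by omega), if_neg h0]
    split_ifs <;> omega

lemma rowCard (s a b : ℕ) (hs : 0 < s) (hba : b ≤ a) :
    ((Finset.Icc 1 a).filter (fun j => b < j ∧ (a - j + 1) % s = 0)).card = (a - b) / s := by
  have : (a - b) / s = (Finset.Icc 1 ((a - b) / s)).card := by simp
  rw [this]
  apply Finset.card_bij' (fun j _ => (a - j + 1) / s) (fun k _ => a + 1 - k * s)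
  · intro j hj
    simp only [Finset.mem_filter, Finset.mem_Icc] at hj ⊢
    obtain ⟨⟨hj1, hja⟩, hbj, hdvd⟩ := hj
    have hdvd' : s ∣ (a - j + 1) := Nat.dvd_of_mod_eq_zero hdvd
    have hd1 : 1 ≤ a - j + 1 := by omega
    have hs_le : s ≤ a - j + 1 := Nat.le_of_dvd (by omega) hdvd'
    constructor
    · exact (Nat.le_div_iff_mul_le hs).mpr (by omega)
    · exact Nat.div_le_div_right (by omega)
  · intro k hk
    simp only [Finset.mem_filter, Finset.mem_Icc] at hk ⊢
    obtain ⟨hk1, hk2⟩ := hk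
    have hks : k * s ≤ a - b := (Nat.le_div_iff_mul_le hs).mp hk2
    have hsk : s ≤ k * s := Nat.le_mul_of_pos_left s (by omega)
    refine ⟨⟨by omega, by omega⟩, by omega, ?_⟩
    have : a - (a + 1 - k * s) + 1 = k * s := by omega
    rw [this, Nat.mul_mod_left]
  · intro j hj
    simp only [Finset.mem_filter, Finset.mem_Icc] at hj
    obtain ⟨⟨hj1, hja⟩, hbj, hdvd⟩ := hj
    have hdvd' : s ∣ (a - j + 1) := Nat.dvd_of_mod_eq_zero hdvd
    have := Nat.div_mul_cancel hdvd'
    omega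
  · intro k hk
    simp only [Finset.mem_Icc] at hk
    obtain ⟨hk1, hk2⟩ := hk
    have hks : k * s ≤ a - b := (Nat.le_div_iff_mul_le hs).mp hk2
    have hsk : s ≤ k * s := Nat.le_mul_of_pos_left s (by omega)
    have h1 : a - (a + 1 - k * s) + 1 = k * s := by omega
    rw [h1, Nat.mul_div_cancel _ hs]

lemma partCs_cons (s a : ℕ) (t : List ℕ) :
    partCs s (a :: t) =
      ((Finset.Icc 1 a).filter (fun j => t.headD 0 < j ∧ (a - j + 1) % s = 0)).card
        + partCs s t := by
  unfold partCs
  rw [List.length_cons, Finset.sum_range_succ']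
  simp only [List.getD_cons_succ, List.getD_cons_zero]
  rw [Nat.add_comm]
  congr 2
  cases t <;> simp

lemma partRem_cons (s a : ℕ) (t : List ℕ) :
    partRem s (a :: t) = if a % s = 0 then partRem s t else (a % s) :: partRem s t := by
  by_cases h : a % s = 0 <;> simp [partRem, h]

lemma mainC (s : ℕ) (hs : 0 < s) (l : List ℕ) (hsort : l.Pairwise (· ≥ ·))
    (hrem : (partRem s l).Pairwise (· < ·)) :
    partCs s l + (partRem s l).length = (l.headD 0 + s - 1) / s := by
  induction l with
  | nil =>
    simp [partCs, partRem]
    exact (Nat.div_eq_of_lt (by omega)).symm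
  | cons a t ih =>
    have hsort' := (List.pairwise_cons.mp hsort).2
    have hba : t.headD 0 ≤ a := by
      cases t with
      | nil => simp
      | cons b t' => exact (List.pairwise_cons.mp hsort).1 b (by simp)
    have hrem' : (partRem s t).Pairwise (· < ·) := by
      rw [partRem_cons] at hrem
      split_ifs at hrem
      · exact hrem
      · exact hrem.of_cons
    have hkey : t.headD 0 % s ≠ 0 → a % s < t.headD 0 % s := by
      intro hb0
      cases t with
      | nil => simp [Nat.zero_mod] at hb0
      | cons b t' =>
        simp only [List.headD_cons] at hb0 ⊢
        by_cases ha0 : a % s = 0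
        · have := Nat.pos_of_ne_zero hb0; omega
        · have hmem : b % s ∈ partRem s (b :: t') := by
            rw [partRem_cons, if_neg hb0]; simp
          rw [partRem_cons, if_neg ha0] at hrem
          exact (List.pairwise_cons.mp hrem).1 _ hmem
    have ih' := ih hsort' hrem'
    have hk := keyArith s a (t.headD 0) hs hba hkey
    rw [partCs_cons, partRem_cons, rowCard s a (t.headD 0) hs hba]
    simp only [List.headD_cons]
    by_cases ha0 : a % s = 0
    · rw [if_pos ha0] at hk ⊢
      omega
    · rw [if_neg ha0] at hk ⊢
      simp only [List.length_cons]
      omega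

theorem stmt8 (s : ℕ) (hs : 0 < s) (l : List ℕ) (hl : IsPartition l)
    (hne : l ≠ []) (hinc : (partRem s l).Pairwise (· < ·)) :
    partRs s l = l.length - (partRem s l).length ∧
    partCs s l = (l.headD 0 + s - 1) / s - (partRem s l).length := by
  obtain ⟨hsort, hpos⟩ := hl
  constructor
  · have h1 : (partRem s l).length = l.countP (fun x => decide (x % s ≠ 0)) := by
      rw [partRem, ← List.countP_eq_length_filter, List.countP_map]
      rfl
    have h2 := List.length_eq_countP_add_countP (fun x => decide (x % s = 0)) (l := l)
    have h3 : l.countP (fun a => decide ¬((fun x => decide (x % s = 0)) a = true))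
        = l.countP (fun x => decide (x % s ≠ 0)) := by
      apply List.countP_congr
      intro x _
      simp
    rw [h3] at h2
    rw [partRs, h1]
    omega
  · have := mainC s hs l hsort hinc
    omega
end

section
/- Let ρ = (ρ_1, …, ρ_m) be a sequence of positive integers of length m ≥ 1, and let G ≥ m be a fixed positive integer. Then, as polynomials in Q, Q^{wmaj(ρ)} · ∑ Q^{∑_{j=1}^m d_j (γ_j − 1)} = ∑ Q^{(γ_1 − 1) + … + (γ_m − 1)}, where both sums range over all strictly increasing sequences 1 ≤ γ_1 < γ_2 < … < γ_m with γ_m = G, and (d_1, …, d_m) = d(ρ, γ). -/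
open Polynomial

/-- The weak major index: the sum of positions `j` (1-indexed) with `ρ_j ≥ ρ_{j+1}`. -/
def wmaj (ρ : List ℕ) : ℕ :=
  ∑ i ∈ Finset.range (ρ.length - 1),
    if ρ.getD (i + 1) 0 ≤ ρ.getD i 0 then i + 1 else 0

/-- `d(ρ, γ)_j` for the 0-indexed position `j` (corresponding to the 1-indexed
position `j + 1`): it is `0` if `j ≥ 1`, `ρ_j ≥ ρ_{j+1}` and `γ_{j+1} = γ_j + 1`
(1-indexed), and `1` otherwise. -/
def dseq (ρ γ : List ℕ) (j : ℕ) : ℕ :=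
  if 0 < j ∧ ρ.getD j 0 ≤ ρ.getD (j - 1) 0 ∧ γ.getD j 0 = γ.getD (j - 1) 0 + 1
  then 0 else 1

namespace Stmt12

def phi (j : ℕ) (γ : ℕ → ℕ) (k : ℕ) : ℕ :=
  if γ j = γ (j - 1) + 1 then
    if k = 0 then 1 else if k < j then γ (k - 1) + 1 else γ k
  else
    if k < j then γ k + 1 else γ k

def psi (j : ℕ) (γ : ℕ → ℕ) (k : ℕ) : ℕ :=
  if γ 0 = 1 then
    if k < j - 1 then γ (k + 1) - 1 else if k = j - 1 then γ j - 1 else γ k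
  else
    if k < j then γ k - 1 else γ k

def IsBox (m G : ℕ) (γ : ℕ → ℕ) : Prop :=
  0 < γ 0 ∧ (∀ k, k + 1 < m → γ k < γ (k + 1)) ∧ γ (m - 1) = G ∧ ∀ k, m ≤ k → γ k = 0

open scoped Classical in
noncomputable def box (m G : ℕ) : Finset (ℕ → ℕ) :=
  ((Finset.Icc 1 (G - 1)).powersetCard (m - 1)).image
    (fun T => fun k => (T.sort (· ≤ ·) ++ [G]).getD k 0)

def dD (D : Finset ℕ) (γ : ℕ → ℕ) (k : ℕ) : ℕ :=
  if 0 < k ∧ k ∈ D ∧ γ k = γ (k - 1) + 1 then 0 else 1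

lemma IsBox.lt {m G : ℕ} {γ : ℕ → ℕ} (h : IsBox m G γ) :
    ∀ {l k : ℕ}, k < l → l < m → γ k < γ l := by
  intro l
  induction l with
  | zero => omega
  | succ n ih =>
    intro k hkl hlm
    rcases Nat.lt_succ_iff_lt_or_eq.mp hkl with h' | h'
    · exact lt_trans (ih h' (by omega)) (h.2.1 n hlm)
    · subst h'; exact h.2.1 k hlm

lemma IsBox.pos {m G : ℕ} {γ : ℕ → ℕ} (h : IsBox m G γ) {k : ℕ} (hk : k < m) : 0 < γ k := by
  rcases Nat.eq_zero_or_pos k with rfl | hk0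
  · exact h.1
  · exact lt_trans h.1 (h.lt hk0 hk)

section eval
variable {j k : ℕ} {γ : ℕ → ℕ}

lemma phi_pl_zero (hpl : γ j = γ (j - 1) + 1) : phi j γ 0 = 1 := by
  simp [phi, hpl]

lemma phi_pl_lt (hpl : γ j = γ (j - 1) + 1) (h0 : 0 < k) (h : k < j) :
    phi j γ k = γ (k - 1) + 1 := by
  rw [phi, if_pos hpl, if_neg (by omega), if_pos h]

lemma phi_jump_lt (hpl : ¬ γ j = γ (j - 1) + 1) (h : k < j) : phi j γ k = γ k + 1 := by
  rw [phi, if_neg hpl, if_pos h]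

lemma phi_ge (hj0 : 0 < j) (h : j ≤ k) : phi j γ k = γ k := by
  rw [phi]
  split_ifs with h1 h2 h3 <;> first | rfl | omega

lemma psi_one_lt (h0 : γ 0 = 1) (h : k < j - 1) : psi j γ k = γ (k + 1) - 1 := by
  rw [psi, if_pos h0, if_pos h]

lemma psi_one_eq (h0 : γ 0 = 1) : psi j γ (j - 1) = γ j - 1 := by
  rw [psi, if_pos h0, if_neg (by omega), if_pos rfl]

lemma psi_ne_lt (h0 : ¬ γ 0 = 1) (h : k < j) : psi j γ k = γ k - 1 := by
  rw [psi, if_neg h0, if_pos h]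

lemma psi_ge (hj0 : 0 < j) (h : j ≤ k) : psi j γ k = γ k := by
  rw [psi]
  split_ifs with h1 h2 h3 <;> first | rfl | omega

end eval

lemma gfun_isBox {m G : ℕ} (hm : 1 ≤ m) (hG : 1 ≤ G) {T : Finset ℕ}
    (hT : T ∈ (Finset.Icc 1 (G - 1)).powersetCard (m - 1)) :
    IsBox m G (fun k => (T.sort (· ≤ ·) ++ [G]).getD k 0) := by
  rw [Finset.mem_powersetCard] at hT
  obtain ⟨hTsub, hTcard⟩ := hT
  set L : List ℕ := T.sort (· ≤ ·) ++ [G] with hL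
  have hlen : L.length = m := by
    simp [hL, Finset.length_sort, hTcard]; omega
  have hsorted : L.Pairwise (· < ·) := by
    rw [hL, List.pairwise_append]
    refine ⟨(Finset.sortedLT_sort T).pairwise, by simp, ?_⟩
    intro a ha b hb
    simp only [List.mem_singleton] at hb
    subst hb
    have := hTsub (Finset.mem_sort (α := ℕ) (· ≤ ·) |>.mp ha)
    rw [Finset.mem_Icc] at this
    omega
  have hmem : ∀ x ∈ L, 1 ≤ x := by
    intro x hx
    rw [hL, List.mem_append] at hx
    rcases hx with hx | hx
    · have := hTsub (Finset.mem_sort (α := ℕ) (· ≤ ·) |>.mp hx)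
      rw [Finset.mem_Icc] at this; omega
    · simp only [List.mem_singleton] at hx; omega
  refine ⟨?_, ?_, ?_, ?_⟩
  · have h0 : (0 : ℕ) < L.length := by omega
    show 0 < L.getD 0 0
    rw [List.getD_eq_getElem _ _ h0]
    exact hmem _ (List.getElem_mem h0)
  · intro k hk
    show L.getD k 0 < L.getD (k+1) 0
    rw [List.getD_eq_getElem _ _ (show k < L.length by omega),
      List.getD_eq_getElem _ _ (show k + 1 < L.length by omega)]
    exact List.pairwise_iff_getElem.mp hsorted k (k+1) (by omega) (by omega) (by omega)
  · show L.getD (m-1) 0 = G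
    have hsl : (T.sort (· ≤ ·)).length = m - 1 := by simp [Finset.length_sort, hTcard]
    rw [hL, List.getD_append_right _ _ _ _ (by omega)]
    simp [hsl]
  · intro k hk
    show L.getD k 0 = 0
    exact List.getD_eq_default _ _ (by omega)

lemma isBox_exists {m G : ℕ} (hm : 1 ≤ m) {γ : ℕ → ℕ} (hγ : IsBox m G γ) :
    ∃ T ∈ (Finset.Icc 1 (G - 1)).powersetCard (m - 1),
      (fun k => (T.sort (· ≤ ·) ++ [G]).getD k 0) = γ := by
  classical
  set l : List ℕ := (List.range (m - 1)).map γ with hl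
  have hlen : l.length = m - 1 := by simp [hl]
  have hget : ∀ k (h : k < m - 1), l.getD k 0 = γ k := by
    intro k h
    rw [List.getD_eq_getElem _ _ (by omega)]
    simp [hl]
  have hsortl : l.Pairwise (· < ·) := by
    rw [List.pairwise_iff_getElem]
    intro i j hi hj hij
    rw [hlen] at hi hj
    have h1 : l[i] = γ i := by rw [← List.getD_eq_getElem _ 0, hget i hi]
    have h2 : l[j] = γ j := by rw [← List.getD_eq_getElem _ 0, hget j hj]
    rw [h1, h2]
    exact hγ.lt hij (by omega)
  have hnodup : l.Nodup := hsortl.nodup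
  have hsortle : l.Pairwise (· ≤ ·) := hsortl.imp le_of_lt
  refine ⟨l.toFinset, ?_, ?_⟩
  · rw [Finset.mem_powersetCard]
    constructor
    · intro x hx
      rw [List.mem_toFinset, hl, List.mem_map] at hx
      obtain ⟨i, hi, rfl⟩ := hx
      rw [List.mem_range] at hi
      rw [Finset.mem_Icc]
      have h1 : 0 < γ i := hγ.pos (by omega)
      have h2 : γ i < G := by
        have := hγ.lt (k := i) (l := m - 1) (by omega) (by omega)
        rw [hγ.2.2.1] at this; exact this
      omega
    · rw [List.toFinset_card_of_nodup hnodup, hlen]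
  · have hsort_eq : l.toFinset.sort (· ≤ ·) = l :=
      (List.toFinset_sort (· ≤ ·) hnodup).mpr hsortle
    rw [hsort_eq]
    funext k
    rcases lt_trichotomy k (m - 1) with h | h | h
    · rw [List.getD_append _ _ _ _ (by omega), hget k h]
    · subst h
      rw [List.getD_append_right _ _ _ _ (by omega), hlen]
      simpa using hγ.2.2.1.symm
    · rw [List.getD_eq_default _ _ (by simp; omega)]
      exact (hγ.2.2.2 k (by omega)).symm

lemma mem_box_iff {m G : ℕ} (hm : 1 ≤ m) (hG : 1 ≤ G) {γ : ℕ → ℕ} :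
    γ ∈ box m G ↔ IsBox m G γ := by
  classical
  constructor
  · intro h
    rw [box, Finset.mem_image] at h
    obtain ⟨T, hT, rfl⟩ := h
    exact gfun_isBox hm hG hT
  · intro h
    obtain ⟨T, hT, hEq⟩ := isBox_exists hm h
    rw [box, Finset.mem_image]
    exact ⟨T, hT, hEq⟩

lemma phi_isBox {m G j : ℕ} {γ : ℕ → ℕ} (hγ : IsBox m G γ) (hj0 : 0 < j) (hjm : j < m) :
    IsBox m G (phi j γ) := by
  have h0 : 0 < γ 0 := hγ.1
  by_cases hpl : γ j = γ (j - 1) + 1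
  · refine ⟨by rw [phi_pl_zero hpl]; omega, ?_, ?_, ?_⟩
    · intro k hk
      by_cases hb : k + 1 < j
      · have e2 : phi j γ (k + 1) = γ k + 1 := by
          rw [phi_pl_lt hpl (by omega) hb]; simp
        rcases Nat.eq_zero_or_pos k with rfl | hk0
        · rw [phi_pl_zero hpl, e2]; omega
        · rw [phi_pl_lt hpl hk0 (by omega), e2]
          have := hγ.lt (show k - 1 < k by omega) (show k < m by omega)
          omega
      · by_cases hc : k + 1 = j
        · have e2 : phi j γ (k + 1) = γ k + 1 := by
            rw [phi_ge hj0 (by omega)]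
            subst hc
            simpa using hpl
          rcases Nat.eq_zero_or_pos k with rfl | hk0
          · rw [phi_pl_zero hpl, e2]; omega
          · rw [phi_pl_lt hpl hk0 (by omega), e2]
            have := hγ.lt (show k - 1 < k by omega) (show k < m by omega)
            omega
        · rw [phi_ge hj0 (by omega), phi_ge hj0 (by omega)]
          exact hγ.2.1 k hk
    · rw [phi_ge hj0 (by omega)]; exact hγ.2.2.1
    · intro k hk
      rw [phi_ge hj0 (by omega)]; exact hγ.2.2.2 k hk
  · have hlt : γ (j - 1) < γ j := hγ.lt (by omega) hjm
    refine ⟨?_, ?_, ?_, ?_⟩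
    · by_cases h : 0 < j
      · rw [phi_jump_lt hpl (by omega)]; omega
      · omega
    · intro k hk
      by_cases hb : k + 1 < j
      · rw [phi_jump_lt hpl (by omega), phi_jump_lt hpl hb]
        have := hγ.2.1 k hk; omega
      · by_cases hc : k + 1 = j
        · rw [phi_jump_lt hpl (by omega), phi_ge hj0 (by omega)]
          have : γ (j - 1) + 1 < γ j := by omega
          rw [← hc] at this
          simpa using this
        · rw [phi_ge hj0 (by omega), phi_ge hj0 (by omega)]
          exact hγ.2.1 k hk
    · rw [phi_ge hj0 (by omega)]; exact hγ.2.2.1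
    · intro k hk
      rw [phi_ge hj0 (by omega)]; exact hγ.2.2.2 k hk

lemma psi_isBox {m G j : ℕ} {γ : ℕ → ℕ} (hγ : IsBox m G γ) (hj0 : 0 < j) (hjm : j < m) :
    IsBox m G (psi j γ) := by
  have h0 : 0 < γ 0 := hγ.1
  have hm2 : 1 < m := by omega
  have h01 : γ 0 < γ 1 := hγ.2.1 0 (by omega)
  by_cases hone : γ 0 = 1
  · refine ⟨?_, ?_, ?_, ?_⟩
    · rcases Nat.lt_or_ge 0 (j - 1) with h | h
      · rw [psi_one_lt hone h]
        simp only [Nat.zero_add]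
        omega
      · have hj1 : j = 1 := by omega
        subst hj1
        rw [show (0:ℕ) = 1 - 1 by rfl, psi_one_eq hone]
        omega
    · intro k hk
      by_cases hb : k + 1 < j - 1
      · rw [psi_one_lt hone (by omega), psi_one_lt hone hb]
        have := hγ.2.1 (k + 1) (by omega)
        have := hγ.pos (show k + 1 < m by omega)
        omega
      · by_cases hc : k + 1 = j - 1
        · rw [psi_one_lt hone (by omega), show k + 1 = j - 1 from hc, psi_one_eq hone]
          have h1 : γ (j - 1) < γ j := hγ.lt (by omega) hjm
          have h2 : 0 < γ (j - 1) := hγ.pos (by omega)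
          omega
        · by_cases hd : k = j - 1
          · rw [show k = j - 1 from hd, psi_one_eq hone, psi_ge hj0 (by omega),
              show j - 1 + 1 = j by omega]
            have := hγ.pos (show j < m by omega)
            omega
          · rw [psi_ge hj0 (by omega), psi_ge hj0 (by omega)]
            exact hγ.2.1 k hk
    · rw [psi_ge hj0 (by omega)]; exact hγ.2.2.1
    · intro k hk
      rw [psi_ge hj0 (by omega)]; exact hγ.2.2.2 k hk
  · refine ⟨?_, ?_, ?_, ?_⟩
    · rcases Nat.lt_or_ge 0 j with h | h
      · rw [psi_ne_lt hone h]; omega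
      · omega
    · intro k hk
      by_cases hb : k + 1 < j
      · rw [psi_ne_lt hone (by omega), psi_ne_lt hone hb]
        have h1 := hγ.2.1 k hk
        have h2 := hγ.pos (show k < m by omega)
        omega
      · by_cases hc : k + 1 = j
        · rw [psi_ne_lt hone (by omega), psi_ge hj0 (by omega)]
          have := hγ.2.1 k hk
          omega
        · rw [psi_ge hj0 (by omega), psi_ge hj0 (by omega)]
          exact hγ.2.1 k hk
    · rw [psi_ge hj0 (by omega)]; exact hγ.2.2.1
    · intro k hk
      rw [psi_ge hj0 (by omega)]; exact hγ.2.2.2 k hk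

lemma psi_phi {m G j : ℕ} {γ : ℕ → ℕ} (hγ : IsBox m G γ) (hj0 : 0 < j) (hjm : j < m) :
    psi j (phi j γ) = γ := by
  have h0 : 0 < γ 0 := hγ.1
  funext k
  by_cases hpl : γ j = γ (j - 1) + 1
  · have hphi0 : phi j γ 0 = 1 := phi_pl_zero hpl
    by_cases hb : k < j - 1
    · rw [psi_one_lt hphi0 hb, phi_pl_lt hpl (by omega) (by omega)]
      simp
    · by_cases hc : k = j - 1
      · rw [show k = j - 1 from hc, psi_one_eq hphi0, phi_ge hj0 (le_refl j), hpl]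
        simp
      · rw [psi_ge hj0 (by omega), phi_ge hj0 (by omega)]
  · have hphi0 : ¬ phi j γ 0 = 1 := by
      rw [phi_jump_lt hpl hj0]; omega
    by_cases hb : k < j
    · rw [psi_ne_lt hphi0 hb, phi_jump_lt hpl hb]
      simp
    · rw [psi_ge hj0 (by omega), phi_ge hj0 (by omega)]

lemma phi_psi {m G j : ℕ} {δ : ℕ → ℕ} (hδ : IsBox m G δ) (hj0 : 0 < j) (hjm : j < m) :
    phi j (psi j δ) = δ := by
  have h0 : 0 < δ 0 := hδ.1
  have hδj : 0 < δ j := hδ.pos hjm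
  funext k
  by_cases hone : δ 0 = 1
  · have e1 : psi j δ j = δ j := psi_ge hj0 (le_refl j)
    have e2 : psi j δ (j - 1) = δ j - 1 := psi_one_eq hone
    have hpl : psi j δ j = psi j δ (j - 1) + 1 := by
      rw [e1, e2]; omega
    by_cases hk0 : k = 0
    · subst hk0
      rw [phi_pl_zero hpl]
      exact hone.symm
    · by_cases hb : k < j
      · rw [phi_pl_lt hpl (by omega) hb]
        have e3 : psi j δ (k - 1) = δ k - 1 := by
          by_cases hc : k - 1 < j - 1
          · rw [psi_one_lt hone hc, show k - 1 + 1 = k by omega]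
          · rw [show k - 1 = j - 1 by omega, psi_one_eq hone, show k = j by omega]
        rw [e3]
        have := hδ.pos (show k < m by omega)
        omega
      · rw [phi_ge hj0 (by omega), psi_ge hj0 (by omega)]
  · have hδ1 : δ (j - 1) < δ j := hδ.lt (by omega) hjm
    have e1 : psi j δ j = δ j := psi_ge hj0 (le_refl j)
    have e2 : psi j δ (j - 1) = δ (j - 1) - 1 := psi_ne_lt hone (by omega)
    have hpl : ¬ psi j δ j = psi j δ (j - 1) + 1 := by
      rw [e1, e2]
      have : 0 < δ (j - 1) := hδ.pos (by omega)
      omega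
    by_cases hb : k < j
    · rw [phi_jump_lt hpl hb, psi_ne_lt hone hb]
      have : 0 < δ k := hδ.pos (by omega)
      omega
    · rw [phi_ge hj0 (by omega), psi_ge hj0 (by omega)]

lemma dD_not_mem {D : Finset ℕ} {γ : ℕ → ℕ} {k : ℕ} (h : k ∉ D) : dD D γ k = 1 := by
  rw [dD, if_neg]
  rintro ⟨-, h2, -⟩
  exact h h2

lemma sum_split {M : Type*} [AddCommMonoid M] {m j : ℕ} (hjm : j < m) (f : ℕ → M) :
    ∑ k ∈ Finset.range m, f k
      = ((∑ k ∈ Finset.range j, f k) + f j) + ∑ k ∈ Finset.Ico (j + 1) m, f k := by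
  rw [← Finset.sum_range_succ]
  exact (Finset.sum_range_add_sum_Ico f (by omega)).symm

lemma exp_eq {m G j : ℕ} {γ : ℕ → ℕ} (hγ : IsBox m G γ) (hj0 : 0 < j) (hjm : j < m)
    {s : Finset ℕ} (hs : ∀ x ∈ s, j < x) :
    ∑ k ∈ Finset.range m, dD s (phi j γ) k * (phi j γ k - 1)
      = j + ∑ k ∈ Finset.range m, dD (insert j s) γ k * (γ k - 1) := by
  have hjs : j ∉ s := fun h => absurd (hs j h) (lt_irrefl j)
  rw [sum_split hjm (fun k => dD s (phi j γ) k * (phi j γ k - 1)),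
    sum_split hjm (fun k => dD (insert j s) γ k * (γ k - 1))]
  have htail : ∑ k ∈ Finset.Ico (j + 1) m, dD s (phi j γ) k * (phi j γ k - 1)
      = ∑ k ∈ Finset.Ico (j + 1) m, dD (insert j s) γ k * (γ k - 1) := by
    apply Finset.sum_congr rfl
    intro k hk
    rw [Finset.mem_Ico] at hk
    have e1 : phi j γ k = γ k := phi_ge hj0 (by omega)
    have e2 : phi j γ (k - 1) = γ (k - 1) := phi_ge hj0 (by omega)
    have e3 : (k ∈ s) = (k ∈ insert j s) := propext
      ⟨fun h => Finset.mem_insert_of_mem h,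
       fun h => (Finset.mem_insert.mp h).resolve_left (by omega)⟩
    simp only [dD, e1, e2, e3]
  have hpre : ∑ k ∈ Finset.range j, dD s (phi j γ) k * (phi j γ k - 1)
      = ∑ k ∈ Finset.range j, (phi j γ k - 1) := by
    apply Finset.sum_congr rfl
    intro k hk
    rw [Finset.mem_range] at hk
    rw [dD_not_mem (fun h => absurd (hs k h) (by omega)), one_mul]
  have hpre2 : ∑ k ∈ Finset.range j, dD (insert j s) γ k * (γ k - 1)
      = ∑ k ∈ Finset.range j, (γ k - 1) := by
    apply Finset.sum_congr rfl
    intro k hk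
    rw [Finset.mem_range] at hk
    have : k ∉ insert j s := by
      rw [Finset.mem_insert]
      rintro (rfl | h)
      · omega
      · exact absurd (hs k h) (by omega)
    rw [dD_not_mem this, one_mul]
  have hdj : dD s (phi j γ) j = 1 := dD_not_mem hjs
  have hφj : phi j γ j = γ j := phi_ge hj0 (le_refl j)
  have hsum1 : ∑ k ∈ Finset.range j, γ k = j + ∑ k ∈ Finset.range j, (γ k - 1) := by
    have : ∀ k ∈ Finset.range j, γ k = (γ k - 1) + 1 := by
      intro k hk
      rw [Finset.mem_range] at hk
      have := hγ.pos (show k < m by omega)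
      omega
    rw [Finset.sum_congr rfl this, Finset.sum_add_distrib, Finset.sum_const,
      Finset.card_range, smul_eq_mul, mul_one]
    omega
  simp only [htail, hpre, hpre2, hdj, hφj, one_mul]
  by_cases hpl : γ j = γ (j - 1) + 1
  · have hdins : dD (insert j s) γ j = 0 := by
      rw [dD, if_pos ⟨hj0, Finset.mem_insert_self j s, hpl⟩]
    rw [hdins]
    obtain ⟨j', rfl⟩ : ∃ j', j = j' + 1 := ⟨j - 1, by omega⟩
    have hpl' : γ (j' + 1) = γ j' + 1 := by simpa using hpl
    have hL : ∑ k ∈ Finset.range (j' + 1), (phi (j' + 1) γ k - 1)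
        = ∑ i ∈ Finset.range j', γ i := by
      rw [Finset.sum_range_succ']
      have h1 : ∀ i ∈ Finset.range j', phi (j' + 1) γ (i + 1) - 1 = γ i := by
        intro i hi
        rw [Finset.mem_range] at hi
        rw [phi_pl_lt hpl (by omega) (by omega)]
        simp
      rw [Finset.sum_congr rfl h1, phi_pl_zero hpl]
      simp
    rw [hL]
    have h2 : γ (j' + 1) - 1 = γ j' := by omega
    have h3 : ∑ i ∈ Finset.range j', γ i + γ j' = ∑ i ∈ Finset.range (j' + 1), γ i :=
      (Finset.sum_range_succ γ j').symm
    omega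
  · have hdins : dD (insert j s) γ j = 1 := by
      rw [dD, if_neg]
      rintro ⟨-, -, h⟩
      exact hpl h
    rw [hdins, one_mul]
    have hL : ∑ k ∈ Finset.range j, (phi j γ k - 1) = ∑ k ∈ Finset.range j, γ k := by
      apply Finset.sum_congr rfl
      intro k hk
      rw [Finset.mem_range] at hk
      rw [phi_jump_lt hpl hk]
      simp
    omega

lemma key {m G : ℕ} (hm : 1 ≤ m) (hG : 1 ≤ G) (D : Finset ℕ) :
    D ⊆ Finset.Ico 1 m →
    ∑ γ ∈ box m G,
        (X : Polynomial ℤ) ^ ((∑ j ∈ D, j) + ∑ k ∈ Finset.range m, dD D γ k * (γ k - 1))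
      = ∑ γ ∈ box m G, (X : Polynomial ℤ) ^ (∑ k ∈ Finset.range m, (γ k - 1)) := by
  induction D using Finset.induction_on_min with
  | empty =>
    intro _
    apply Finset.sum_congr rfl
    intro γ _
    congr 1
    simp [dD]
  | insert a s ha ih =>
    intro hD
    have haI : a ∈ Finset.Ico 1 m := hD (Finset.mem_insert_self a s)
    rw [Finset.mem_Ico] at haI
    have hsD : s ⊆ Finset.Ico 1 m := fun x hx => hD (Finset.mem_insert_of_mem hx)
    have hans : a ∉ s := fun h => absurd (ha a h) (lt_irrefl a)
    rw [← ih hsD, Finset.sum_insert hans]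
    refine Finset.sum_nbij' (phi a) (psi a) ?_ ?_ ?_ ?_ ?_
    · intro γ hγ
      exact (mem_box_iff hm hG).mpr
        (phi_isBox ((mem_box_iff hm hG).mp hγ) (by omega) (by omega))
    · intro δ hδ
      exact (mem_box_iff hm hG).mpr
        (psi_isBox ((mem_box_iff hm hG).mp hδ) (by omega) (by omega))
    · intro γ hγ
      exact psi_phi ((mem_box_iff hm hG).mp hγ) (by omega) (by omega)
    · intro δ hδ
      exact phi_psi ((mem_box_iff hm hG).mp hδ) (by omega) (by omega)
    · intro γ hγ
      congr 1
      have := exp_eq ((mem_box_iff hm hG).mp hγ) (show 0 < a by omega)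
        (show a < m by omega) (s := s) (fun x hx => ha x hx)
      omega

end Stmt12

/-- Strictly increasing sequences `1 ≤ γ_1 < … < γ_m` with `γ_m = G` correspond to
`(m-1)`-element subsets `T` of `{1, …, G-1}`, via `γ = (sorted T) ++ [G]`. -/
theorem stmt12 (m G : ℕ) (hm : 1 ≤ m) (hG : m ≤ G) (ρ : List ℕ)
    (hρlen : ρ.length = m) (hρpos : ∀ x ∈ ρ, 0 < x) :
    (Polynomial.X : Polynomial ℤ) ^ wmaj ρ *
      ∑ T ∈ (Finset.Icc 1 (G - 1)).powersetCard (m - 1),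
        (Polynomial.X : Polynomial ℤ) ^
          (∑ j ∈ Finset.range m,
            dseq ρ (T.sort (· ≤ ·) ++ [G]) j * ((T.sort (· ≤ ·) ++ [G]).getD j 0 - 1)) =
    ∑ T ∈ (Finset.Icc 1 (G - 1)).powersetCard (m - 1),
        (Polynomial.X : Polynomial ℤ) ^
          (∑ j ∈ Finset.range m, ((T.sort (· ≤ ·) ++ [G]).getD j 0 - 1)) := by
  classical
  have hG1 : 1 ≤ G := le_trans hm hG
  set P := (Finset.Icc 1 (G - 1)).powersetCard (m - 1) with hP
  set D : Finset ℕ := (Finset.Ico 1 m).filter (fun j => ρ.getD j 0 ≤ ρ.getD (j - 1) 0)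
    with hDdef
  have hDsub : D ⊆ Finset.Ico 1 m := Finset.filter_subset _ _
  -- weak major index as a sum over the descent set
  have hwmaj : wmaj ρ = ∑ j ∈ D, j := by
    rw [hDdef, Finset.sum_filter, wmaj, hρlen, Finset.sum_Ico_eq_sum_range]
    apply Finset.sum_congr rfl
    intro i hi
    have h1 : 1 + i = i + 1 := by omega
    rw [h1]
    simp
  -- injectivity of T ↦ sorted list function
  have hinj : ∀ T1 ∈ P, ∀ T2 ∈ P,
      (fun k => (T1.sort (· ≤ ·) ++ [G]).getD k 0)
        = (fun k => (T2.sort (· ≤ ·) ++ [G]).getD k 0) → T1 = T2 := by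
    intro T1 hT1 T2 hT2 h
    rw [hP, Finset.mem_powersetCard] at hT1 hT2
    have hc1 : (T1.sort (· ≤ ·)).length = m - 1 := by simp [hT1.2]
    have hc2 : (T2.sort (· ≤ ·)).length = m - 1 := by simp [hT2.2]
    have hl : T1.sort (· ≤ ·) ++ [G] = T2.sort (· ≤ ·) ++ [G] := by
      apply List.ext_getElem (by simp [hc1, hc2])
      intro n h1 h2
      have := congrFun h n
      rwa [List.getD_eq_getElem _ _ h1, List.getD_eq_getElem _ _ h2] at this
    have hsort : T1.sort (· ≤ ·) = T2.sort (· ≤ ·) := by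
      have := congrArg List.dropLast hl
      simpa using this
    have := congrArg List.toFinset hsort
    rwa [Finset.sort_toFinset, Finset.sort_toFinset] at this
  have himg : ∀ F : (ℕ → ℕ) → Polynomial ℤ,
      ∑ T ∈ P, F (fun k => (T.sort (· ≤ ·) ++ [G]).getD k 0)
        = ∑ γ ∈ Stmt12.box m G, F γ := by
    intro F
    rw [Stmt12.box, ← hP, Finset.sum_image hinj]
  -- rewrite dseq in terms of dD
  have hds : ∀ T : Finset ℕ, ∀ k ∈ Finset.range m,
      dseq ρ (T.sort (· ≤ ·) ++ [G]) k * ((T.sort (· ≤ ·) ++ [G]).getD k 0 - 1)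
        = Stmt12.dD D (fun k => (T.sort (· ≤ ·) ++ [G]).getD k 0) k
            * ((T.sort (· ≤ ·) ++ [G]).getD k 0 - 1) := by
    intro T k hk
    rw [Finset.mem_range] at hk
    congr 1
    rw [dseq, Stmt12.dD]
    refine if_congr ?_ rfl rfl
    constructor
    · rintro ⟨h1, h2, h3⟩
      refine ⟨h1, ?_, h3⟩
      rw [hDdef, Finset.mem_filter, Finset.mem_Ico]
      exact ⟨⟨h1, hk⟩, h2⟩
    · rintro ⟨h1, h2, h3⟩
      rw [hDdef, Finset.mem_filter] at h2
      exact ⟨h1, h2.2, h3⟩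
  calc (Polynomial.X : Polynomial ℤ) ^ wmaj ρ *
      ∑ T ∈ P, (Polynomial.X : Polynomial ℤ) ^
        (∑ j ∈ Finset.range m,
          dseq ρ (T.sort (· ≤ ·) ++ [G]) j * ((T.sort (· ≤ ·) ++ [G]).getD j 0 - 1))
      = ∑ T ∈ P, (Polynomial.X : Polynomial ℤ) ^
          ((∑ j ∈ D, j) + ∑ k ∈ Finset.range m,
            Stmt12.dD D (fun k => (T.sort (· ≤ ·) ++ [G]).getD k 0) k
              * ((T.sort (· ≤ ·) ++ [G]).getD k 0 - 1)) := by
        rw [Finset.mul_sum]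
        apply Finset.sum_congr rfl
        intro T hT
        rw [← pow_add, hwmaj, Finset.sum_congr rfl (hds T)]
    _ = ∑ γ ∈ Stmt12.box m G, (Polynomial.X : Polynomial ℤ) ^
          ((∑ j ∈ D, j) + ∑ k ∈ Finset.range m, Stmt12.dD D γ k * (γ k - 1)) :=
        himg (fun γ => (Polynomial.X : Polynomial ℤ) ^
          ((∑ j ∈ D, j) + ∑ k ∈ Finset.range m, Stmt12.dD D γ k * (γ k - 1)))
    _ = ∑ γ ∈ Stmt12.box m G, (Polynomial.X : Polynomial ℤ) ^
          (∑ k ∈ Finset.range m, (γ k - 1)) := Stmt12.key hm hG1 D hDsub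
    _ = ∑ T ∈ P, (Polynomial.X : Polynomial ℤ) ^
          (∑ j ∈ Finset.range m, ((T.sort (· ≤ ·) ++ [G]).getD j 0 - 1)) :=
        (himg (fun γ => (Polynomial.X : Polynomial ℤ) ^
          (∑ j ∈ Finset.range m, (γ j - 1)))).symm
end
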